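/- Assume that κ_n² and ξ_n² are real for every n = 1,…,N and that ε := −(κ_nξ_n)/(κ_n^*ξ_n^*) does not depend on n. Writing 𝒜(λ)·Id = ∏_{k=1}^{p} A(q^kλ), ℬ(λ)·Id = ∏_{k=1}^{p} B(q^kλ), 𝒞(λ)·Id = ∏_{k=1}^{p} C(q^kλ), 𝒟(λ)·Id = ∏_{k=1}^{p} D(q^kλ) for the scalar-valued average functions, these scalars, viewed as functions of Λ = λ^p, satisfy (𝒜(Λ))^* = 𝒟(Λ^*) and (ℬ(Λ))^* = ε·𝒞(Λ^*) for every nonzero Λ. -/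

import Mathlib

open Matrix Complex Filter Topology

namespace SG

/-- Index set for the basis of `(ℂ^p)^{⊗N}`. -/
abbrev Idx (p N : ℕ) := Fin N → ZMod p

/-- Operators on `(ℂ^p)^{⊗N}`, realized as matrices. -/
abbrev Op (p N : ℕ) := Matrix (Idx p N) (Idx p N) ℂ

/-- The square root of `q`: `q^{1/2} := q^{(p+1)/2}`. -/
noncomputable def qh (p : ℕ) (q : ℂ) : ℂ := q ^ ((p + 1) / 2)

/-- The operator `𝗎_n = u_n · (shift at site n)`, `𝗎_n|k⟩ = u_n |k-1⟩`. -/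
noncomputable def uop (p N : ℕ) (u : Fin N → ℂ) (n : Fin N) : Op p N :=
  Matrix.of fun f g => if f = Function.update g n (g n - 1) then u n else 0

/-- The inverse of `𝗎_n`. -/
noncomputable def uopInv (p N : ℕ) (u : Fin N → ℂ) (n : Fin N) : Op p N :=
  Matrix.of fun f g => if f = Function.update g n (g n + 1) then (u n)⁻¹ else 0

/-- The operator `𝗏_n = v_n · (clock at site n)`, `𝗏_n|k⟩ = v_n q^k |k⟩`. -/
noncomputable def vop (p N : ℕ) (q : ℂ) (v : Fin N → ℂ) (n : Fin N) : Op p N :=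
  Matrix.diagonal fun g => v n * q ^ (g n).val

/-- The inverse of `𝗏_n`. -/
noncomputable def vopInv (p N : ℕ) (q : ℂ) (v : Fin N → ℂ) (n : Fin N) : Op p N :=
  Matrix.diagonal fun g => (v n * q ^ (g n).val)⁻¹

/-- The Lax matrix `L_n(λ)`. -/
noncomputable def Lax (p N : ℕ) [NeZero p] (q : ℂ) (κ ξ u v : Fin N → ℂ) (n : Fin N)
    (lam : ℂ) : Matrix (Fin 2) (Fin 2) (Op p N) :=
  !![κ n • (uop p N u n *
        ((qh p q)⁻¹ • (κ n • vop p N q v n) + qh p q • ((κ n)⁻¹ • vopInv p N q v n))),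
     (κ n / Complex.I) • ((lam / ξ n) • vop p N q v n - (lam / ξ n)⁻¹ • vopInv p N q v n);
     (κ n / Complex.I) • ((lam / ξ n) • vopInv p N q v n - (lam / ξ n)⁻¹ • vop p N q v n),
     κ n • (uopInv p N u n *
        (qh p q • ((κ n)⁻¹ • vop p N q v n) + (qh p q)⁻¹ • (κ n • vopInv p N q v n)))]

/-- The monodromy matrix `M(λ) = L_N(λ) ⋯ L_1(λ)`. -/
noncomputable def Mon (p N : ℕ) [NeZero p] (q : ℂ) (κ ξ u v : Fin N → ℂ) (lam : ℂ) :
    Matrix (Fin 2) (Fin 2) (Op p N) :=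
  (((List.finRange N).map fun n => Lax p N q κ ξ u v n lam).reverse).prod

/-- `A(λ)`, the (1,1) entry of the monodromy matrix. -/
noncomputable def Amat (p N : ℕ) [NeZero p] (q : ℂ) (κ ξ u v : Fin N → ℂ) (lam : ℂ) :
    Op p N := Mon p N q κ ξ u v lam 0 0

/-- `B(λ)`, the (1,2) entry of the monodromy matrix. -/
noncomputable def Bmat (p N : ℕ) [NeZero p] (q : ℂ) (κ ξ u v : Fin N → ℂ) (lam : ℂ) :
    Op p N := Mon p N q κ ξ u v lam 0 1

/-- `C(λ)`, the (2,1) entry of the monodromy matrix. -/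
noncomputable def Cmat (p N : ℕ) [NeZero p] (q : ℂ) (κ ξ u v : Fin N → ℂ) (lam : ℂ) :
    Op p N := Mon p N q κ ξ u v lam 1 0

/-- `D(λ)`, the (2,2) entry of the monodromy matrix. -/
noncomputable def Dmat (p N : ℕ) [NeZero p] (q : ℂ) (κ ξ u v : Fin N → ℂ) (lam : ℂ) :
    Op p N := Mon p N q κ ξ u v lam 1 1

/-- The transfer matrix `T(λ) = A(λ) + D(λ)`. -/
noncomputable def Tmat (p N : ℕ) [NeZero p] (q : ℂ) (κ ξ u v : Fin N → ℂ) (lam : ℂ) :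
    Op p N := Amat p N q κ ξ u v lam + Dmat p N q κ ξ u v lam

/-- The grading charge `Θ = ∏_{n=1}^N 𝗏_n^{(-1)^n}` (sites `n : Fin N` correspond to
the 1-indexed site `n+1`, whence the exponent `(-1)^{n+1}`); it is a diagonal operator. -/
noncomputable def Theta (p N : ℕ) (q : ℂ) (v : Fin N → ℂ) : Op p N :=
  Matrix.diagonal fun g => ∏ n : Fin N, (v n * q ^ (g n).val) ^ ((-1 : ℤ) ^ ((n : ℕ) + 1))

/-- The inverse `Θ^{-1}` of the grading charge. -/
noncomputable def ThetaInv (p N : ℕ) (q : ℂ) (v : Fin N → ℂ) : Op p N :=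
  Matrix.diagonal fun g => ∏ n : Fin N, (v n * q ^ (g n).val) ^ ((-1 : ℤ) ^ (n : ℕ))

/-- The average `𝒪(λ) = ∏_{k=1}^p O(q^k λ)` of a commuting family `O`. -/
noncomputable def avg (p N : ℕ) [NeZero p] (q : ℂ) (O : ℂ → Op p N) (lam : ℂ) : Op p N :=
  ((List.range p).map fun k => O (q ^ (k + 1) * lam)).prod

noncomputable def loc (p N : ℕ) (n : Fin N) (c : ZMod p) (w : ZMod p → ℂ) : Op p N :=
  Matrix.of fun f g => if f = Function.update g n (g n + c) then w (g n) else 0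

lemma update_cond_iff {p N : ℕ} (n : Fin N) (c : ZMod p) (f g : Idx p N) :
    g = Function.update f n (f n + c) ↔ f = Function.update g n (g n - c) := by
  constructor
  · rintro rfl
    simp [Function.update_idem, Function.update_self, Function.update_eq_self]
  · rintro rfl
    simp [Function.update_idem, Function.update_self, Function.update_eq_self]

lemma loc_mul_apply {p N : ℕ} [NeZero p] (n m : Fin N) (c c' : ZMod p)
    (w w' : ZMod p → ℂ) (f g : Idx p N) :
    (loc p N n c w * loc p N m c' w') f g =
      if f = Function.update (Function.update g m (g m + c')) n
          ((Function.update g m (g m + c')) n + c)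
        then w ((Function.update g m (g m + c')) n) * w' (g m) else 0 := by
  simp only [loc, Matrix.mul_apply, Matrix.of_apply]
  rw [Finset.sum_eq_single (Function.update g m (g m + c'))]
  · rw [if_pos rfl]
    split <;> simp
  · intro h _ hne; simp [if_neg hne]
  · simp

lemma loc_mul_loc_self {p N : ℕ} [NeZero p] (n : Fin N) (c c' : ZMod p) (w w' : ZMod p → ℂ) :
    loc p N n c w * loc p N n c' w' = loc p N n (c + c') (fun k => w (k + c') * w' k) := by
  ext f g
  rw [loc_mul_apply]
  simp [loc, Function.update_idem, Function.update_self, add_comm c c', add_assoc]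

lemma loc_mul_loc_comm {p N : ℕ} [NeZero p] {n m : Fin N} (hnm : n ≠ m) (c c' : ZMod p)
    (w w' : ZMod p → ℂ) :
    loc p N n c w * loc p N m c' w' = loc p N m c' w' * loc p N n c w := by
  ext f g
  rw [loc_mul_apply, loc_mul_apply]
  rw [Function.update_of_ne hnm, Function.update_of_ne hnm.symm,
    Function.update_comm hnm.symm]
  rw [mul_comm (w' (g m))]

lemma loc_star {p N : ℕ} (n : Fin N) (c : ZMod p) (w : ZMod p → ℂ) :
    star (loc p N n c w) = loc p N n (-c) (fun k => (starRingEnd ℂ) (w (k - c))) := by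
  ext f g
  simp only [Matrix.star_apply, loc, Matrix.of_apply]
  by_cases h : g = Function.update f n (f n + c)
  · rw [if_pos h, if_pos (by rwa [← sub_eq_add_neg, ← update_cond_iff])]
    subst h
    simp [Function.update_self, RCLike.star_def]
  · rw [if_neg h, if_neg (by rw [← sub_eq_add_neg, ← update_cond_iff]; exact h), star_zero]

lemma smul_loc {p N : ℕ} (a : ℂ) (n : Fin N) (c : ZMod p) (w : ZMod p → ℂ) :
    a • loc p N n c w = loc p N n c (fun k => a * w k) := by
  ext f g
  simp [loc, Matrix.smul_apply, smul_eq_mul, mul_ite]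

lemma loc_add_loc {p N : ℕ} (n : Fin N) (c : ZMod p) (w w' : ZMod p → ℂ) :
    loc p N n c w + loc p N n c w' = loc p N n c (fun k => w k + w' k) := by
  ext f g
  simp only [loc, Matrix.add_apply, Matrix.of_apply]
  split <;> simp

lemma loc_sub_loc {p N : ℕ} (n : Fin N) (c : ZMod p) (w w' : ZMod p → ℂ) :
    loc p N n c w - loc p N n c w' = loc p N n c (fun k => w k - w' k) := by
  ext f g
  simp only [loc, Matrix.sub_apply, Matrix.of_apply]
  split <;> simp

/-- `q^(a.val)` as a homomorphic function of `a : ZMod p`, given `q ^ p = 1`. -/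
lemma pow_val_add {p : ℕ} [NeZero p] {q : ℂ} (hqp : q ^ p = 1) (a b : ZMod p) :
    q ^ (a + b).val = q ^ a.val * q ^ b.val := by
  rw [ZMod.val_add, ← pow_add]
  conv_rhs => rw [← Nat.div_add_mod (a.val + b.val) p]
  rw [pow_add, pow_mul, hqp, one_pow, one_mul]

lemma uop_eq_loc (p N : ℕ) (u : Fin N → ℂ) (n : Fin N) :
    uop p N u n = loc p N n (-1) fun _ => u n := by
  ext f g; simp [uop, loc, sub_eq_add_neg]

lemma uopInv_eq_loc (p N : ℕ) (u : Fin N → ℂ) (n : Fin N) :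
    uopInv p N u n = loc p N n 1 fun _ => (u n)⁻¹ := by
  ext f g; simp [uopInv, loc]

lemma diagonal_eq_loc (p N : ℕ) (n : Fin N) (w : ZMod p → ℂ) :
    Matrix.diagonal (fun g : Idx p N => w (g n)) = loc p N n 0 w := by
  ext f g
  simp only [Matrix.diagonal_apply, loc, Matrix.of_apply, add_zero, Function.update_eq_self]
  by_cases h : f = g
  · subst h; simp
  · rw [if_neg h, if_neg h]

lemma vop_eq_loc (p N : ℕ) (q : ℂ) (v : Fin N → ℂ) (n : Fin N) :
    vop p N q v n = loc p N n 0 fun k => v n * q ^ k.val :=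
  diagonal_eq_loc p N n (fun k => v n * q ^ k.val)

lemma vopInv_eq_loc (p N : ℕ) (q : ℂ) (v : Fin N → ℂ) (n : Fin N) :
    vopInv p N q v n = loc p N n 0 fun k => (v n * q ^ k.val)⁻¹ :=
  diagonal_eq_loc p N n (fun k => (v n * q ^ k.val)⁻¹)
lemma loc_congr {p N : ℕ} {n : Fin N} {c : ZMod p} {w w' : ZMod p → ℂ}
    (h : ∀ k, w k = w' k) : loc p N n c w = loc p N n c w' := by
  have : w = w' := funext h
  rw [this]

section LaxEntries
variable (p N : ℕ) [NeZero p] (q : ℂ) (κ ξ u v : Fin N → ℂ) (n : Fin N) (lam : ℂ)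

lemma lax00 : Lax p N q κ ξ u v n lam 0 0 =
    loc p N n (-1) (fun k => κ n * (u n *
      ((qh p q)⁻¹ * (κ n * (v n * q ^ k.val)) + qh p q * ((κ n)⁻¹ * (v n * q ^ k.val)⁻¹)))) := by
  have h : Lax p N q κ ξ u v n lam 0 0 = κ n • (uop p N u n *
      ((qh p q)⁻¹ • (κ n • vop p N q v n) + qh p q • ((κ n)⁻¹ • vopInv p N q v n))) := by
    simp [Lax]
  rw [h, vop_eq_loc, vopInv_eq_loc, uop_eq_loc, smul_loc, smul_loc, smul_loc, smul_loc,
    loc_add_loc, loc_mul_loc_self, smul_loc]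
  simp

lemma lax11 : Lax p N q κ ξ u v n lam 1 1 =
    loc p N n 1 (fun k => κ n * ((u n)⁻¹ *
      (qh p q * ((κ n)⁻¹ * (v n * q ^ k.val)) + (qh p q)⁻¹ * (κ n * (v n * q ^ k.val)⁻¹)))) := by
  have h : Lax p N q κ ξ u v n lam 1 1 = κ n • (uopInv p N u n *
      (qh p q • ((κ n)⁻¹ • vop p N q v n) + (qh p q)⁻¹ • (κ n • vopInv p N q v n))) := by
    simp [Lax]
  rw [h, vop_eq_loc, vopInv_eq_loc, uopInv_eq_loc, smul_loc, smul_loc, smul_loc, smul_loc,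
    loc_add_loc, loc_mul_loc_self, smul_loc]
  simp

lemma lax01 : Lax p N q κ ξ u v n lam 0 1 =
    loc p N n 0 (fun k => (κ n / Complex.I) *
      ((lam / ξ n) * (v n * q ^ k.val) - (lam / ξ n)⁻¹ * (v n * q ^ k.val)⁻¹)) := by
  have h : Lax p N q κ ξ u v n lam 0 1 = (κ n / Complex.I) •
      ((lam / ξ n) • vop p N q v n - (lam / ξ n)⁻¹ • vopInv p N q v n) := by
    simp [Lax]
  rw [h, vop_eq_loc, vopInv_eq_loc, smul_loc, smul_loc, loc_sub_loc, smul_loc]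

lemma lax10 : Lax p N q κ ξ u v n lam 1 0 =
    loc p N n 0 (fun k => (κ n / Complex.I) *
      ((lam / ξ n) * (v n * q ^ k.val)⁻¹ - (lam / ξ n)⁻¹ * (v n * q ^ k.val))) := by
  have h : Lax p N q κ ξ u v n lam 1 0 = (κ n / Complex.I) •
      ((lam / ξ n) • vopInv p N q v n - (lam / ξ n)⁻¹ • vop p N q v n) := by
    simp [Lax]
  rw [h, vop_eq_loc, vopInv_eq_loc, smul_loc, smul_loc, loc_sub_loc, smul_loc]

end LaxEntries
lemma key00 (cκ K qh q u a : ℂ) (h2 : cκ * cκ = K * K) (hqh : qh * qh = q)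
    (ha : a ≠ 0) (hK : K ≠ 0) (hcκ : cκ ≠ 0) (hqh0 : qh ≠ 0) (hu : u ≠ 0) (hq : q ≠ 0) :
    cκ * (u⁻¹ * (qh * (cκ * (q * a)⁻¹) + qh⁻¹ * (cκ⁻¹ * (q * a)))) =
    K * (u⁻¹ * (qh * (K⁻¹ * a) + qh⁻¹ * (K * a⁻¹))) := by
  field_simp
  linear_combination (qh^2) * h2 + (K^2 - q*a^2) * hqh

lemma key11 (cκ K qh q u a : ℂ) (h2 : cκ * cκ = K * K) (hqh : qh * qh = q)
    (ha : a ≠ 0) (hK : K ≠ 0) (hcκ : cκ ≠ 0) (hqh0 : qh ≠ 0) (hu : u ≠ 0) (hq : q ≠ 0) :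
    cκ * (u * (qh⁻¹ * (cκ⁻¹ * (q * a⁻¹)) + qh * (cκ * (a * q⁻¹)))) =
    K * (u * (qh⁻¹ * (K * a) + qh * (K⁻¹ * a⁻¹))) := by
  field_simp
  linear_combination (qh^2*a^2) * h2 + (K^2*a^2 - q) * hqh

lemma key10 (s t K X cl a i : ℂ) (hs : s * s = 1) (ht : t * t = 1) (hi : i * i = -1)
    (ha : a ≠ 0) (hK : K ≠ 0) (hX : X ≠ 0) (hcl : cl ≠ 0) (hi0 : i ≠ 0) :
    (s * K / (-i)) * ((cl / (t * X)) * a - (cl / (t * X))⁻¹ * a⁻¹) =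
    (-(s * t)) * ((K / i) * ((cl / X) * a - (cl / X)⁻¹ * a⁻¹)) := by
  have hs0 : s ≠ 0 := fun h => by simp [h] at hs
  have ht0 : t ≠ 0 := fun h => by simp [h] at ht
  field_simp
  linear_combination (cl^2*a^2) * ht
lemma key01 (s t K X cl a i : ℂ) (hs : s * s = 1) (ht : t * t = 1) (hi : i * i = -1)
    (ha : a ≠ 0) (hK : K ≠ 0) (hX : X ≠ 0) (hcl : cl ≠ 0) (hi0 : i ≠ 0) :
    (s * K / (-i)) * ((cl / (t * X)) * a⁻¹ - (cl / (t * X))⁻¹ * a) =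
    (-(s * t)) * ((K / i) * ((cl / X) * a⁻¹ - (cl / X)⁻¹ * a)) := by
  have h := key10 s t K X cl a⁻¹ i hs ht hi (inv_ne_zero ha) hK hX hcl hi0
  simpa [inv_inv] using h

section StarLax
variable (p N : ℕ) [NeZero p]

lemma hval1 (hp1 : 1 < p) (q : ℂ) (hqp : q ^ p = 1) (k : ZMod p) :
    q ^ ((k + 1 : ZMod p)).val = q ^ k.val * q := by
  rw [pow_val_add hqp, ZMod.val_one_eq_one_mod, Nat.mod_eq_of_lt hp1, pow_one]

lemma hvalm1 (hp1 : 1 < p) (q : ℂ) (hqp : q ^ p = 1) (hq0 : q ≠ 0) (k : ZMod p) :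
    q ^ ((k - 1 : ZMod p)).val = q ^ k.val * q⁻¹ := by
  have h := hval1 p hp1 q hqp (k - 1)
  rw [sub_add_cancel] at h
  rw [h]
  field_simp

lemma star_lax00 (hp1 : 1 < p) (q : ℂ) (hqp : q ^ p = 1) (hq0 : q ≠ 0)
    (hcq : (starRingEnd ℂ) q = q⁻¹) (hqh2 : qh p q * qh p q = q)
    (hcqh : (starRingEnd ℂ) (qh p q) = (qh p q)⁻¹) (hqh0 : qh p q ≠ 0)
    (κ ξ u v : Fin N → ℂ) (n : Fin N)
    (hκ0 : κ n ≠ 0) (hu0 : u n ≠ 0) (hv0 : v n ≠ 0)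
    (hcu : (starRingEnd ℂ) (u n) = (u n)⁻¹) (hcv : (starRingEnd ℂ) (v n) = (v n)⁻¹)
    (hcκ2 : (starRingEnd ℂ) (κ n) * (starRingEnd ℂ) (κ n) = κ n * κ n)
    (lam : ℂ) :
    star (Lax p N q κ ξ u v n lam 0 0) =
      Lax p N q κ ξ u v n ((starRingEnd ℂ) lam) 1 1 := by
  rw [lax00, loc_star, lax11]
  simp only [neg_neg, sub_neg_eq_add]
  apply loc_congr
  intro k
  simp only [_root_.map_mul, map_add, map_inv₀, map_pow, hcq, hcu, hcv, hcqh]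
  rw [inv_pow, hval1 p hp1 q hqp]
  have haux : q ^ (k : ZMod p).val ≠ 0 := pow_ne_zero _ hq0
  have hcκ0 : (starRingEnd ℂ) (κ n) ≠ 0 := by simp [hκ0]
  generalize hb : q ^ (k : ZMod p).val = b at haux ⊢
  simp only [mul_inv, inv_inv]
  linear_combination key00 ((starRingEnd ℂ) (κ n)) (κ n) (qh p q) q (u n) (v n * b)
    hcκ2 hqh2 (mul_ne_zero hv0 haux) hκ0 hcκ0 hqh0 hu0 hq0

lemma star_lax11 (hp1 : 1 < p) (q : ℂ) (hqp : q ^ p = 1) (hq0 : q ≠ 0)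
    (hcq : (starRingEnd ℂ) q = q⁻¹) (hqh2 : qh p q * qh p q = q)
    (hcqh : (starRingEnd ℂ) (qh p q) = (qh p q)⁻¹) (hqh0 : qh p q ≠ 0)
    (κ ξ u v : Fin N → ℂ) (n : Fin N)
    (hκ0 : κ n ≠ 0) (hu0 : u n ≠ 0) (hv0 : v n ≠ 0)
    (hcu : (starRingEnd ℂ) (u n) = (u n)⁻¹) (hcv : (starRingEnd ℂ) (v n) = (v n)⁻¹)
    (hcκ2 : (starRingEnd ℂ) (κ n) * (starRingEnd ℂ) (κ n) = κ n * κ n)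
    (lam : ℂ) :
    star (Lax p N q κ ξ u v n lam 1 1) =
      Lax p N q κ ξ u v n ((starRingEnd ℂ) lam) 0 0 := by
  rw [lax11, loc_star, lax00]
  apply loc_congr
  intro k
  simp only [_root_.map_mul, map_add, map_inv₀, map_pow, hcq, hcu, hcv, hcqh]
  rw [inv_pow, hvalm1 p hp1 q hqp hq0]
  have haux : q ^ (k : ZMod p).val ≠ 0 := pow_ne_zero _ hq0
  have hcκ0 : (starRingEnd ℂ) (κ n) ≠ 0 := by simp [hκ0]
  generalize hb : q ^ (k : ZMod p).val = b at haux ⊢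
  simp only [mul_inv, inv_inv]
  linear_combination key11 ((starRingEnd ℂ) (κ n)) (κ n) (qh p q) q (u n) (v n * b)
    hcκ2 hqh2 (mul_ne_zero hv0 haux) hκ0 hcκ0 hqh0 hu0 hq0

lemma star_lax01 (hp1 : 1 < p) (q : ℂ) (hqp : q ^ p = 1) (hq0 : q ≠ 0)
    (hcq : (starRingEnd ℂ) q = q⁻¹)
    (κ ξ u v : Fin N → ℂ) (n : Fin N)
    (hκ0 : κ n ≠ 0) (hξ0 : ξ n ≠ 0) (hv0 : v n ≠ 0)
    (hcv : (starRingEnd ℂ) (v n) = (v n)⁻¹)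
    (s t : ℂ) (hs : s * s = 1) (ht : t * t = 1)
    (hsκ : (starRingEnd ℂ) (κ n) = s * κ n) (htξ : (starRingEnd ℂ) (ξ n) = t * ξ n)
    (ε : ℂ) (heps : ε = -(s * t))
    (lam : ℂ) (hlam : lam ≠ 0) :
    star (Lax p N q κ ξ u v n lam 0 1) =
      ε • Lax p N q κ ξ u v n ((starRingEnd ℂ) lam) 1 0 := by
  rw [lax01, loc_star, lax10, smul_loc]
  simp only [neg_zero]
  apply loc_congr
  intro k
  simp only [sub_zero, _root_.map_mul, map_sub, map_div₀, map_inv₀, map_pow, hcq, hcv, hsκ,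
    htξ, Complex.conj_I, heps]
  rw [inv_pow]
  have haux : q ^ (k : ZMod p).val ≠ 0 := pow_ne_zero _ hq0
  have hclam : (starRingEnd ℂ) lam ≠ 0 := by simpa using hlam
  generalize hb : q ^ (k : ZMod p).val = b at haux ⊢
  simp only [mul_inv, inv_inv]
  linear_combination key01 s t (κ n) (ξ n) ((starRingEnd ℂ) lam) (v n * b) Complex.I
    hs ht Complex.I_mul_I (mul_ne_zero hv0 haux) hκ0 hξ0 hclam Complex.I_ne_zero

lemma star_lax10 (hp1 : 1 < p) (q : ℂ) (hqp : q ^ p = 1) (hq0 : q ≠ 0)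
    (hcq : (starRingEnd ℂ) q = q⁻¹)
    (κ ξ u v : Fin N → ℂ) (n : Fin N)
    (hκ0 : κ n ≠ 0) (hξ0 : ξ n ≠ 0) (hv0 : v n ≠ 0)
    (hcv : (starRingEnd ℂ) (v n) = (v n)⁻¹)
    (s t : ℂ) (hs : s * s = 1) (ht : t * t = 1)
    (hsκ : (starRingEnd ℂ) (κ n) = s * κ n) (htξ : (starRingEnd ℂ) (ξ n) = t * ξ n)
    (ε : ℂ) (heps : ε = -(s * t))
    (lam : ℂ) (hlam : lam ≠ 0) :
    star (Lax p N q κ ξ u v n lam 1 0) =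
      ε • Lax p N q κ ξ u v n ((starRingEnd ℂ) lam) 0 1 := by
  rw [lax10, loc_star, lax01, smul_loc]
  simp only [neg_zero]
  apply loc_congr
  intro k
  simp only [sub_zero, _root_.map_mul, map_sub, map_div₀, map_inv₀, map_pow, hcq, hcv, hsκ,
    htξ, Complex.conj_I, heps]
  rw [inv_pow]
  have haux : q ^ (k : ZMod p).val ≠ 0 := pow_ne_zero _ hq0
  have hclam : (starRingEnd ℂ) lam ≠ 0 := by simpa using hlam
  generalize hb : q ^ (k : ZMod p).val = b at haux ⊢
  simp only [mul_inv, inv_inv]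
  linear_combination key10 s t (κ n) (ξ n) ((starRingEnd ℂ) lam) (v n * b) Complex.I
    hs ht Complex.I_mul_I (mul_ne_zero hv0 haux) hκ0 hξ0 hclam Complex.I_ne_zero

end StarLax


section Monodromy
variable (p N : ℕ) [NeZero p] (q : ℂ) (κ ξ u v : Fin N → ℂ)

/-- Partial monodromy over a list of sites. -/
noncomputable def prodL (l : List (Fin N)) (lam : ℂ) : Matrix (Fin 2) (Fin 2) (Op p N) :=
  ((l.map fun n => Lax p N q κ ξ u v n lam).reverse).prod

lemma prodL_nil (lam : ℂ) : prodL p N q κ ξ u v [] lam = 1 := rfl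

lemma prodL_cons (x : Fin N) (l : List (Fin N)) (lam : ℂ) :
    prodL p N q κ ξ u v (x :: l) lam =
      prodL p N q κ ξ u v l lam * Lax p N q κ ξ u v x lam := by
  simp [prodL, List.prod_append]

lemma mon_eq_prodL (lam : ℂ) :
    Mon p N q κ ξ u v lam = prodL p N q κ ξ u v (List.finRange N) lam := rfl

lemma lax_is_loc (n : Fin N) (lam : ℂ) (i j : Fin 2) :
    ∃ c w, Lax p N q κ ξ u v n lam i j = loc p N n c w := by
  fin_cases i <;> fin_cases j
  · exact ⟨_, _, lax00 p N q κ ξ u v n lam⟩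
  · exact ⟨_, _, lax01 p N q κ ξ u v n lam⟩
  · exact ⟨_, _, lax10 p N q κ ξ u v n lam⟩
  · exact ⟨_, _, lax11 p N q κ ξ u v n lam⟩

lemma lax_commute {n m : Fin N} (hnm : n ≠ m) (lam mu : ℂ) (i j k l : Fin 2) :
    Commute (Lax p N q κ ξ u v n lam i j) (Lax p N q κ ξ u v m mu k l) := by
  obtain ⟨c, w, hc⟩ := lax_is_loc p N q κ ξ u v n lam i j
  obtain ⟨c', w', hc'⟩ := lax_is_loc p N q κ ξ u v m mu k l
  rw [Commute, SemiconjBy, hc, hc', loc_mul_loc_comm hnm]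

lemma lax_commute_prodL (x : Fin N) (l : List (Fin N)) (hx : x ∉ l) (lam mu : ℂ)
    (i j k m : Fin 2) :
    Commute (Lax p N q κ ξ u v x lam i j) (prodL p N q κ ξ u v l mu k m) := by
  induction l generalizing k m with
  | nil =>
    rw [prodL_nil]
    by_cases h : k = m
    · simp [Matrix.one_apply, h]
    · simp [Matrix.one_apply, h]
  | cons y t ih =>
    have hxy : x ≠ y := fun h => hx (h ▸ (List.mem_cons_self : y ∈ y :: t))
    have hxt : x ∉ t := fun h => hx (List.mem_cons_of_mem y h)
    rw [prodL_cons, Matrix.mul_apply, Fin.sum_univ_two]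
    exact Commute.add_right
      (Commute.mul_right (ih hxt k 0) (lax_commute p N q κ ξ u v hxy lam mu i j 0 m))
      (Commute.mul_right (ih hxt k 1) (lax_commute p N q κ ξ u v hxy lam mu i j 1 m))

lemma mon_star_prodL (ε : ℂ) (hε2 : ε * ε = 1)
    (hL00 : ∀ (n : Fin N) (mu : ℂ), star (Lax p N q κ ξ u v n mu 0 0) =
      Lax p N q κ ξ u v n ((starRingEnd ℂ) mu) 1 1)
    (hL11 : ∀ (n : Fin N) (mu : ℂ), star (Lax p N q κ ξ u v n mu 1 1) =
      Lax p N q κ ξ u v n ((starRingEnd ℂ) mu) 0 0)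
    (hL01 : ∀ (n : Fin N) (mu : ℂ), mu ≠ 0 → star (Lax p N q κ ξ u v n mu 0 1) =
      ε • Lax p N q κ ξ u v n ((starRingEnd ℂ) mu) 1 0)
    (hL10 : ∀ (n : Fin N) (mu : ℂ), mu ≠ 0 → star (Lax p N q κ ξ u v n mu 1 0) =
      ε • Lax p N q κ ξ u v n ((starRingEnd ℂ) mu) 0 1)
    (l : List (Fin N)) (hl : l.Nodup) (lam : ℂ) (hlam : lam ≠ 0) :
    star (prodL p N q κ ξ u v l lam 0 0) =
        prodL p N q κ ξ u v l ((starRingEnd ℂ) lam) 1 1 ∧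
      star (prodL p N q κ ξ u v l lam 0 1) =
        ε • prodL p N q κ ξ u v l ((starRingEnd ℂ) lam) 1 0 ∧
      star (prodL p N q κ ξ u v l lam 1 0) =
        ε • prodL p N q κ ξ u v l ((starRingEnd ℂ) lam) 0 1 ∧
      star (prodL p N q κ ξ u v l lam 1 1) =
        prodL p N q κ ξ u v l ((starRingEnd ℂ) lam) 0 0 := by
  induction l with
  | nil =>
    refine ⟨?_, ?_, ?_, ?_⟩ <;> simp [prodL_nil, Matrix.one_apply]
  | cons x t ih =>
    have hxt : x ∉ t := (List.nodup_cons.mp hl).1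
    obtain ⟨i00, i01, i10, i11⟩ := ih (List.nodup_cons.mp hl).2
    set cl := (starRingEnd ℂ) lam with hcl
    have C : ∀ i j k m : Fin 2,
        Lax p N q κ ξ u v x cl i j * prodL p N q κ ξ u v t cl k m =
        prodL p N q κ ξ u v t cl k m * Lax p N q κ ξ u v x cl i j := fun i j k m =>
      (lax_commute_prodL p N q κ ξ u v x t hxt cl cl i j k m).eq
    refine ⟨?_, ?_, ?_, ?_⟩
    · rw [prodL_cons, prodL_cons, Matrix.mul_apply, Matrix.mul_apply,
        Fin.sum_univ_two, Fin.sum_univ_two, star_add, StarMul.star_mul, StarMul.star_mul,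
        hL00, hL10 x lam hlam, i00, i01, smul_mul_smul, hε2, one_smul, C 1 1 1 1, C 0 1 1 0]
      exact add_comm _ _
    · rw [prodL_cons, prodL_cons, Matrix.mul_apply, Matrix.mul_apply,
        Fin.sum_univ_two, Fin.sum_univ_two, star_add, StarMul.star_mul, StarMul.star_mul,
        hL01 x lam hlam, hL11, i00, i01, smul_mul_assoc, mul_smul_comm, C 1 0 1 1, C 0 0 1 0,
        smul_add]
      exact add_comm _ _
    · rw [prodL_cons, prodL_cons, Matrix.mul_apply, Matrix.mul_apply,
        Fin.sum_univ_two, Fin.sum_univ_two, star_add, StarMul.star_mul, StarMul.star_mul,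
        hL00, hL10 x lam hlam, i10, i11, mul_smul_comm, smul_mul_assoc, C 1 1 0 1, C 0 1 0 0,
        smul_add]
      exact add_comm _ _
    · rw [prodL_cons, prodL_cons, Matrix.mul_apply, Matrix.mul_apply,
        Fin.sum_univ_two, Fin.sum_univ_two, star_add, StarMul.star_mul, StarMul.star_mul,
        hL01 x lam hlam, hL11, i10, i11, smul_mul_smul, hε2, one_smul, C 1 0 0 1, C 0 0 0 0]
      exact add_comm _ _
end Monodromy


section Avg
variable (p N : ℕ) [NeZero p]

lemma star_prodOp : ∀ (l : List (Op p N)), star l.prod = ((l.map star).reverse).prod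
  | [] => by simp
  | a :: t => by
    rw [List.prod_cons, StarMul.star_mul, star_prodOp t, List.map_cons, List.reverse_cons,
      List.prod_append, List.prod_cons, List.prod_nil, mul_one]

lemma smul_map_prod (e : ℂ) (f : ℕ → Op p N) :
    ∀ (l : List ℕ), (l.map fun k => e • f k).prod = e ^ l.length • (l.map f).prod
  | [] => by simp
  | a :: t => by
    rw [List.map_cons, List.prod_cons, smul_map_prod e f t, List.map_cons, List.prod_cons,
      smul_mul_smul, List.length_cons, pow_succ]
    ring_nf

lemma avg_smul (q : ℂ) (e : ℂ) (O : ℂ → Op p N) (lam : ℂ) :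
    avg p N q (fun mu => e • O mu) lam = e ^ p • avg p N q O lam := by
  rw [avg, avg, smul_map_prod p N e (fun k => O (q ^ (k + 1) * lam)), List.length_range]

lemma star_avg (q : ℂ) (hqp : q ^ p = 1) (hq0 : q ≠ 0)
    (hcq : (starRingEnd ℂ) q = q⁻¹)
    (O O' : ℂ → Op p N) (h : ∀ mu : ℂ, mu ≠ 0 → star (O mu) = O' ((starRingEnd ℂ) mu))
    (lam : ℂ) (hlam : lam ≠ 0) :
    star (avg p N q O lam) =
      avg p N q O' (q ^ (p - 1) * (starRingEnd ℂ) lam) := by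
  rw [avg, avg, star_prodOp, List.map_map]
  congr 1
  have h1 : ((List.range p).map fun k => (star ∘ fun k => O (q ^ (k + 1) * lam)) k) =
      (List.range p).map fun k => O' ((starRingEnd ℂ) (q ^ (k + 1) * lam)) := by
    refine List.map_congr_left fun k hk => ?_
    exact h _ (mul_ne_zero (pow_ne_zero _ hq0) hlam)
  rw [h1]
  apply List.ext_getElem
  · simp
  · intro j h₁ h₂
    have hjp : j < p := by simpa using h₂
    rw [List.getElem_reverse]
    simp only [List.getElem_map, List.getElem_range, List.length_reverse, List.length_map,
      List.length_range]
    congr 1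
    have hidx : p - 1 - j + 1 = p - j := by omega
    rw [hidx, _root_.map_mul, map_pow, hcq, inv_pow]
    have hone : q ^ (p - j) * q ^ (j + 1 + (p - 1)) = 1 := by
      rw [← pow_add]
      have : p - j + (j + 1 + (p - 1)) = 2 * p := by omega
      rw [this, pow_mul', hqp, one_pow]
    rw [inv_eq_of_mul_eq_one_right hone, pow_add, mul_assoc]
end Avg

/-- Under the reality conditions on `κ_n²`, `ξ_n²` and uniformity of
`ε = -(κ_nξ_n)/(κ_n^*ξ_n^*)`, the scalar average functions of `Λ = λ^p` satisfy
`(𝒜(Λ))^* = 𝒟(Λ^*)` and `(ℬ(Λ))^* = ε·𝒞(Λ^*)` for every nonzero `Λ`. -/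
theorem statement5 (p N : ℕ) [NeZero p] (hp : Odd p) (hp1 : 1 < p)
    (q : ℂ) (hq : IsPrimitiveRoot q p)
    (κ ξ u v : Fin N → ℂ) (hκ : ∀ n, κ n ≠ 0) (hξ : ∀ n, ξ n ≠ 0)
    (hu : ∀ n, ‖u n‖ = 1) (hv : ∀ n, ‖v n‖ = 1)
    (hN : 0 < N) (ε : ℂ)
    (hκR : ∀ n, (starRingEnd ℂ) (κ n ^ 2) = κ n ^ 2)
    (hξR : ∀ n, (starRingEnd ℂ) (ξ n ^ 2) = ξ n ^ 2)
    (hε : ∀ n, -(κ n * ξ n) / ((starRingEnd ℂ) (κ n) * (starRingEnd ℂ) (ξ n)) = ε)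
    (calA calB calC calD : ℂ → ℂ)
    (hA : ∀ lam : ℂ, lam ≠ 0 →
      avg p N q (Amat p N q κ ξ u v) lam = calA (lam ^ p) • (1 : Op p N))
    (hB : ∀ lam : ℂ, lam ≠ 0 →
      avg p N q (Bmat p N q κ ξ u v) lam = calB (lam ^ p) • (1 : Op p N))
    (hC : ∀ lam : ℂ, lam ≠ 0 →
      avg p N q (Cmat p N q κ ξ u v) lam = calC (lam ^ p) • (1 : Op p N))
    (hD : ∀ lam : ℂ, lam ≠ 0 →
      avg p N q (Dmat p N q κ ξ u v) lam = calD (lam ^ p) • (1 : Op p N)) :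
    ∀ Lam : ℂ, Lam ≠ 0 →
      (starRingEnd ℂ) (calA Lam) = calD ((starRingEnd ℂ) Lam) ∧
      (starRingEnd ℂ) (calB Lam) = ε * calC ((starRingEnd ℂ) Lam) := by
  intro Lam hLam
  have hp0 : p ≠ 0 := NeZero.ne p
  have hqp : q ^ p = 1 := hq.pow_eq_one
  have hq0 : q ≠ 0 := by
    intro h; rw [h, zero_pow hp0] at hqp; exact one_ne_zero hqp.symm
  have habs : ‖q‖ = 1 := Complex.norm_eq_one_of_pow_eq_one hqp hp0
  have hcq : (starRingEnd ℂ) q = q⁻¹ := (Complex.inv_eq_conj habs).symm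
  have hqh2 : qh p q * qh p q = q := by
    rw [qh, ← pow_add]
    have h2 : (p + 1) / 2 + (p + 1) / 2 = p + 1 := by
      obtain ⟨m, hm⟩ := hp; omega
    rw [h2, pow_succ, hqp, one_mul]
  have hqh0 : qh p q ≠ 0 := pow_ne_zero _ hq0
  have hcqh : (starRingEnd ℂ) (qh p q) = (qh p q)⁻¹ := by rw [qh, map_pow, hcq, inv_pow]
  have hu0 : ∀ n, u n ≠ 0 := by
    intro n h; have := hu n; rw [h] at this; simp at this
  have hv0 : ∀ n, v n ≠ 0 := by
    intro n h; have := hv n; rw [h] at this; simp at this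
  have hcu : ∀ n, (starRingEnd ℂ) (u n) = (u n)⁻¹ := fun n => (Complex.inv_eq_conj (hu n)).symm
  have hcv : ∀ n, (starRingEnd ℂ) (v n) = (v n)⁻¹ := fun n => (Complex.inv_eq_conj (hv n)).symm
  have hcκ2 : ∀ n, (starRingEnd ℂ) (κ n) * (starRingEnd ℂ) (κ n) = κ n * κ n := by
    intro n; have h := hκR n; rw [map_pow] at h; linear_combination h
  have hsex : ∀ n : Fin N, ∃ s : ℂ, s * s = 1 ∧ (starRingEnd ℂ) (κ n) = s * κ n := by
    intro n
    have h := hκR n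
    rw [map_pow] at h
    have h0 : ((starRingEnd ℂ) (κ n) - κ n) * ((starRingEnd ℂ) (κ n) + κ n) = 0 := by
      linear_combination h
    rcases mul_eq_zero.mp h0 with h1 | h1
    · exact ⟨1, by norm_num, by linear_combination h1⟩
    · exact ⟨-1, by norm_num, by linear_combination h1⟩
  have htex : ∀ n : Fin N, ∃ t : ℂ, t * t = 1 ∧ (starRingEnd ℂ) (ξ n) = t * ξ n := by
    intro n
    have h := hξR n
    rw [map_pow] at h
    have h0 : ((starRingEnd ℂ) (ξ n) - ξ n) * ((starRingEnd ℂ) (ξ n) + ξ n) = 0 := by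
      linear_combination h
    rcases mul_eq_zero.mp h0 with h1 | h1
    · exact ⟨1, by norm_num, by linear_combination h1⟩
    · exact ⟨-1, by norm_num, by linear_combination h1⟩
  choose sF hsF using hsex
  choose tF htF using htex
  have hep : ∀ n, ε = -(sF n * tF n) := by
    intro n
    have hs0 : sF n ≠ 0 := fun h => by have := (hsF n).1; rw [h] at this; simp at this
    have ht0 : tF n ≠ 0 := fun h => by have := (htF n).1; rw [h] at this; simp at this
    have h := hε n
    rw [(hsF n).2, (htF n).2] at h
    rw [← h, div_eq_iff (mul_ne_zero (mul_ne_zero hs0 (hκ n)) (mul_ne_zero ht0 (hξ n)))]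
    linear_combination ((κ n * ξ n) * tF n * tF n) * (hsF n).1 + (κ n * ξ n) * (htF n).1
  have hε2 : ε * ε = 1 := by
    have h := hep ⟨0, hN⟩
    rw [h]
    linear_combination (tF ⟨0, hN⟩ * tF ⟨0, hN⟩) * (hsF ⟨0, hN⟩).1 + (htF ⟨0, hN⟩).1
  have hεp : ε ^ p = ε := by
    obtain ⟨m, hm⟩ := hp
    have h2 : ε ^ 2 = 1 := by rw [pow_two, hε2]
    rw [hm, pow_add, pow_mul, h2, one_pow, pow_one, one_mul]
  have hM : ∀ (mu : ℂ), mu ≠ 0 →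
      star (prodL p N q κ ξ u v (List.finRange N) mu 0 0) =
          prodL p N q κ ξ u v (List.finRange N) ((starRingEnd ℂ) mu) 1 1 ∧
        star (prodL p N q κ ξ u v (List.finRange N) mu 0 1) =
          ε • prodL p N q κ ξ u v (List.finRange N) ((starRingEnd ℂ) mu) 1 0 ∧
        star (prodL p N q κ ξ u v (List.finRange N) mu 1 0) =
          ε • prodL p N q κ ξ u v (List.finRange N) ((starRingEnd ℂ) mu) 0 1 ∧
        star (prodL p N q κ ξ u v (List.finRange N) mu 1 1) =
          prodL p N q κ ξ u v (List.finRange N) ((starRingEnd ℂ) mu) 0 0 := by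
    intro mu hmu
    exact mon_star_prodL p N q κ ξ u v ε hε2
      (fun n nu => star_lax00 p N hp1 q hqp hq0 hcq hqh2 hcqh hqh0 κ ξ u v n
        (hκ n) (hu0 n) (hv0 n) (hcu n) (hcv n) (hcκ2 n) nu)
      (fun n nu => star_lax11 p N hp1 q hqp hq0 hcq hqh2 hcqh hqh0 κ ξ u v n
        (hκ n) (hu0 n) (hv0 n) (hcu n) (hcv n) (hcκ2 n) nu)
      (fun n nu hnu => star_lax01 p N hp1 q hqp hq0 hcq κ ξ u v n
        (hκ n) (hξ n) (hv0 n) (hcv n) (sF n) (tF n) (hsF n).1 (htF n).1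
        (hsF n).2 (htF n).2 ε (hep n) nu hnu)
      (fun n nu hnu => star_lax10 p N hp1 q hqp hq0 hcq κ ξ u v n
        (hκ n) (hξ n) (hv0 n) (hcv n) (sF n) (tF n) (hsF n).1 (htF n).1
        (hsF n).2 (htF n).2 ε (hep n) nu hnu)
      (List.finRange N) (List.nodup_finRange N) mu hmu
  have hne : Nonempty (Idx p N) := ⟨fun _ => 0⟩
  have smul_one_inj : ∀ {c d : ℂ}, c • (1 : Op p N) = d • (1 : Op p N) → c = d := by
    intro c d h
    have h2 := congrFun (congrFun h (fun _ => 0)) (fun _ => 0)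
    simpa [Matrix.smul_apply, Matrix.one_apply] using h2
  obtain ⟨lam, hlm⟩ := IsAlgClosed.exists_pow_nat_eq Lam (Nat.pos_of_ne_zero hp0)
  have hlam0 : lam ≠ 0 := by
    intro h; rw [h, zero_pow hp0] at hlm; exact hLam hlm.symm
  set mu := q ^ (p - 1) * (starRingEnd ℂ) lam with hmudef
  have hmu0 : mu ≠ 0 := mul_ne_zero (pow_ne_zero _ hq0) (by simpa using hlam0)
  have hmup : mu ^ p = (starRingEnd ℂ) Lam := by
    rw [hmudef, mul_pow, ← pow_mul, mul_comm (p - 1) p, pow_mul, hqp, one_pow, one_mul,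
      ← map_pow, hlm]
  constructor
  · have e1 : star (avg p N q (Amat p N q κ ξ u v) lam) =
        avg p N q (Dmat p N q κ ξ u v) mu :=
      star_avg p N q hqp hq0 hcq _ _ (fun nu hnu => (hM nu hnu).1) lam hlam0
    rw [hA lam hlam0, hD mu hmu0, hlm, hmup] at e1
    rw [star_smul, star_one, RCLike.star_def] at e1
    exact smul_one_inj e1
  · have e2 : star (avg p N q (Bmat p N q κ ξ u v) lam) =
        avg p N q (fun nu => ε • Cmat p N q κ ξ u v nu) mu :=
      star_avg p N q hqp hq0 hcq _ _ (fun nu hnu => (hM nu hnu).2.1) lam hlam0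
    rw [avg_smul, hB lam hlam0, hC mu hmu0, hlm, hmup, hεp, smul_smul] at e2
    rw [star_smul, star_one, RCLike.star_def] at e2
    exact smul_one_inj e2

end SG
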